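/- If f is logconcave, then for any 0 ≤ a < b ≤ 1 and any ε₁, ε₂ ≥ 0 with a + ε₁ < b + ε₂ and b + max(ε₁, ε₂) ≤ 1, the conditional mean satisfies φ(a + ε₁, b + ε₂) ≤ φ(a, b) + max(ε₁, ε₂). -/

import Mathlib

open MeasureTheory Set

/-- The mean of the density `f` conditional on the interval `(a, b)`. -/
noncomputable def condMean (g : ℝ → ℝ) (a b : ℝ) : ℝ :=
  (∫ t in a..b, t * g t) / (∫ t in a..b, g t)

/-- A strictly positive function on `[0,1]` is logconcave if its log is concave there. -/
def LogConcaveOn01 (g : ℝ → ℝ) : Prop :=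
  ConcaveOn ℝ (Icc (0:ℝ) 1) fun t => Real.log (g t)

lemma int_pos_aux (f : ℝ → ℝ) (hc : Continuous f) {a b : ℝ} (hab : a < b)
    (hpos : ∀ t ∈ Icc a b, 0 < f t) : 0 < ∫ t in a..b, f t :=
  intervalIntegral.intervalIntegral_pos_of_pos_on (hc.intervalIntegrable a b)
    (fun x hx => hpos x ⟨hx.1.le, hx.2.le⟩) hab

/-- Chebyshev-type inequality: if `g/f` is nonincreasing on `[a,b]`, then the `g`-weighted
mean of `t` is at most the `f`-weighted mean (in cross-multiplied form). -/
lemma cheb (f g : ℝ → ℝ) (hf : Continuous f) (hg : Continuous g) {a b : ℝ} (hab : a ≤ b)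
    (hr : ∀ s t, a ≤ s → s ≤ t → t ≤ b → g t * f s ≤ g s * f t) :
    (∫ t in a..b, t * g t) * (∫ t in a..b, f t)
      ≤ (∫ t in a..b, t * f t) * (∫ t in a..b, g t) := by
  set F := ∫ t in a..b, f t with hF
  set G := ∫ t in a..b, g t with hG
  set SF := ∫ t in a..b, t * f t with hSF
  set SG := ∫ t in a..b, t * g t with hSG
  have hif : IntervalIntegrable f volume a b := hf.intervalIntegrable a b
  have hig : IntervalIntegrable g volume a b := hg.intervalIntegrable a b
  have hisf : IntervalIntegrable (fun t => t * f t) volume a b :=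
    (continuous_id.mul hf).intervalIntegrable a b
  have hisg : IntervalIntegrable (fun t => t * g t) volume a b :=
    (continuous_id.mul hg).intervalIntegrable a b
  have key : ∀ t ∈ Icc a b, 0 ≤ t * f t * G - f t * SG - (t * g t * F - g t * SF) := by
    intro t ht
    have h0 : 0 ≤ ∫ s in a..b, (t - s) * (f t * g s - g t * f s) := by
      apply intervalIntegral.integral_nonneg hab
      intro s hs
      rcases le_total s t with hst | hts
      · have h1 : g t * f s ≤ g s * f t := hr s t hs.1 hst ht.2
        have h2 : 0 ≤ t - s := by linarith
        nlinarith [h1]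
      · have h1 : g s * f t ≤ g t * f s := hr t s ht.1 hts hs.2
        have h3 : t - s ≤ 0 := by linarith
        nlinarith [h1]
    have heq : (∫ s in a..b, (t - s) * (f t * g s - g t * f s))
        = t * f t * G - f t * SG - (t * g t * F - g t * SF) := by
      have hfun : (fun s => (t - s) * (f t * g s - g t * f s))
          = fun s => ((t * f t) * g s - f t * (s * g s)) - ((t * g t) * f s - g t * (s * f s)) := by
        funext s; ring
      rw [hfun, intervalIntegral.integral_sub
          ((hig.const_mul (t * f t)).sub (hisg.const_mul (f t)))
          ((hif.const_mul (t * g t)).sub (hisf.const_mul (g t))),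
        intervalIntegral.integral_sub (hig.const_mul (t * f t)) (hisg.const_mul (f t)),
        intervalIntegral.integral_sub (hif.const_mul (t * g t)) (hisf.const_mul (g t)),
        intervalIntegral.integral_const_mul, intervalIntegral.integral_const_mul,
        intervalIntegral.integral_const_mul, intervalIntegral.integral_const_mul]
    linarith [heq ▸ h0]
  have houter : 0 ≤ ∫ t in a..b, (t * f t * G - f t * SG - (t * g t * F - g t * SF)) :=
    intervalIntegral.integral_nonneg hab key
  have hcalc : (∫ t in a..b, (t * f t * G - f t * SG - (t * g t * F - g t * SF)))
      = SF * G - F * SG - (SG * F - G * SF) := by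
    rw [intervalIntegral.integral_sub
        ((hisf.mul_const G).sub (hif.mul_const SG))
        ((hisg.mul_const F).sub (hig.mul_const SF)),
      intervalIntegral.integral_sub (hisf.mul_const G) (hif.mul_const SG),
      intervalIntegral.integral_sub (hisg.mul_const F) (hig.mul_const SF),
      intervalIntegral.integral_mul_const, intervalIntegral.integral_mul_const,
      intervalIntegral.integral_mul_const, intervalIntegral.integral_mul_const]
  rw [hcalc] at houter
  nlinarith [houter]

/-- The conditional mean compares under a nonincreasing likelihood ratio. -/
lemma condMean_le_of_ratio (f g : ℝ → ℝ) (hf : Continuous f) (hg : Continuous g)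
    {a b : ℝ} (hab : a < b)
    (hfpos : ∀ t ∈ Icc a b, 0 < f t) (hgpos : ∀ t ∈ Icc a b, 0 < g t)
    (hr : ∀ s t, a ≤ s → s ≤ t → t ≤ b → g t * f s ≤ g s * f t) :
    condMean g a b ≤ condMean f a b := by
  have hF : 0 < ∫ t in a..b, f t := int_pos_aux f hf hab hfpos
  have hG : 0 < ∫ t in a..b, g t := int_pos_aux g hg hab hgpos
  have := cheb f g hf hg hab.le hr
  rw [condMean, condMean, div_le_div_iff₀ hG hF]
  exact this

/-- Monotonicity of the conditional mean in the right endpoint. -/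
lemma condMean_mono_right (f : ℝ → ℝ) (hc : Continuous f) {a b b' : ℝ}
    (hab : a < b) (hbb : b ≤ b') (hpos : ∀ t ∈ Icc a b', 0 < f t) :
    condMean f a b ≤ condMean f a b' := by
  have hposab : ∀ t ∈ Icc a b, 0 < f t := fun t ht => hpos t ⟨ht.1, ht.2.trans hbb⟩
  have hA : 0 < ∫ t in a..b, f t := int_pos_aux f hc hab hposab
  have hAB : 0 < ∫ t in a..b', f t := int_pos_aux f hc (hab.trans_le hbb) hpos
  set A := ∫ t in a..b, f t with hAdef
  set M := ∫ t in a..b, t * f t with hMdef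
  set B := ∫ t in b..b', f t with hBdef
  set N := ∫ t in b..b', t * f t with hNdef
  have hsplitA : (∫ t in a..b', f t) = A + B :=
    (intervalIntegral.integral_add_adjacent_intervals (hc.intervalIntegrable a b)
      (hc.intervalIntegrable b b')).symm
  have hsplitM : (∫ t in a..b', t * f t) = M + N :=
    (intervalIntegral.integral_add_adjacent_intervals
      ((continuous_id.mul hc).intervalIntegrable a b)
      ((continuous_id.mul hc).intervalIntegrable b b')).symm
  have hB : 0 ≤ B := intervalIntegral.integral_nonneg hbb
    (fun t ht => (hpos t ⟨hab.le.trans ht.1, ht.2⟩).le)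
  -- M ≤ b * A
  have hM : M ≤ b * A := by
    rw [hMdef, hAdef, ← intervalIntegral.integral_const_mul]
    apply intervalIntegral.integral_mono_on hab.le
      ((continuous_id.mul hc).intervalIntegrable a b)
      ((continuous_const.mul hc).intervalIntegrable a b)
    intro t ht
    exact mul_le_mul_of_nonneg_right ht.2 (hposab t ht).le
  -- b * B ≤ N
  have hN : b * B ≤ N := by
    rw [hNdef, hBdef, ← intervalIntegral.integral_const_mul]
    apply intervalIntegral.integral_mono_on hbb
      ((continuous_const.mul hc).intervalIntegrable b b')
      ((continuous_id.mul hc).intervalIntegrable b b')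
    intro t ht
    exact mul_le_mul_of_nonneg_right ht.1 (hpos t ⟨hab.le.trans ht.1, ht.2⟩).le
  rw [condMean, condMean, hsplitA, hsplitM, div_le_div_iff₀ hA (hsplitA ▸ hAB)]
  nlinarith [hM, hN, hB, hA]

/-- Monotonicity of the conditional mean in the left endpoint. -/
lemma condMean_mono_left (f : ℝ → ℝ) (hc : Continuous f) {a a' b : ℝ}
    (haa : a ≤ a') (hab : a' < b) (hpos : ∀ t ∈ Icc a b, 0 < f t) :
    condMean f a b ≤ condMean f a' b := by
  have hposab : ∀ t ∈ Icc a' b, 0 < f t := fun t ht => hpos t ⟨haa.trans ht.1, ht.2⟩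
  have hA' : 0 < ∫ t in a'..b, f t := int_pos_aux f hc hab hposab
  have hAB : 0 < ∫ t in a..b, f t := int_pos_aux f hc (haa.trans_lt hab) hpos
  set A := ∫ t in a'..b, f t with hAdef
  set M := ∫ t in a'..b, t * f t with hMdef
  set C := ∫ t in a..a', f t with hCdef
  set K := ∫ t in a..a', t * f t with hKdef
  have hsplitA : (∫ t in a..b, f t) = C + A :=
    (intervalIntegral.integral_add_adjacent_intervals (hc.intervalIntegrable a a')
      (hc.intervalIntegrable a' b)).symm
  have hsplitM : (∫ t in a..b, t * f t) = K + M :=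
    (intervalIntegral.integral_add_adjacent_intervals
      ((continuous_id.mul hc).intervalIntegrable a a')
      ((continuous_id.mul hc).intervalIntegrable a' b)).symm
  have hC : 0 ≤ C := intervalIntegral.integral_nonneg haa
    (fun t ht => (hpos t ⟨ht.1, ht.2.trans hab.le⟩).le)
  have hK : K ≤ a' * C := by
    rw [hKdef, hCdef, ← intervalIntegral.integral_const_mul]
    apply intervalIntegral.integral_mono_on haa
      ((continuous_id.mul hc).intervalIntegrable a a')
      ((continuous_const.mul hc).intervalIntegrable a a')
    intro t ht
    exact mul_le_mul_of_nonneg_right ht.2 (hpos t ⟨ht.1, ht.2.trans hab.le⟩).le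
  have hM : a' * A ≤ M := by
    rw [hMdef, hAdef, ← intervalIntegral.integral_const_mul]
    apply intervalIntegral.integral_mono_on hab.le
      ((continuous_const.mul hc).intervalIntegrable a' b)
      ((continuous_id.mul hc).intervalIntegrable a' b)
    intro t ht
    exact mul_le_mul_of_nonneg_right ht.1 (hposab t ht).le
  rw [condMean, condMean, hsplitA, hsplitM, div_le_div_iff₀ (hsplitA ▸ hAB) hA']
  nlinarith [hK, hM, hC, hA']

/-- Logconcavity yields the cross product inequality. -/
lemma lc_cross (f : ℝ → ℝ) (hpos : ∀ t ∈ Icc (0:ℝ) 1, 0 < f t) (hlc : LogConcaveOn01 f)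
    {s t ε : ℝ} (hs : 0 ≤ s) (hst : s ≤ t) (hε : 0 ≤ ε) (ht : t + ε ≤ 1) :
    f (t + ε) * f s ≤ f (s + ε) * f t := by
  rcases eq_or_lt_of_le (show s ≤ t + ε by linarith) with heq | hlt
  · have hts : t = s := by linarith
    have hε0 : ε = 0 := by linarith
    rw [hts, hε0]
  · set L := t + ε - s with hL
    have hLpos : 0 < L := by simp [hL]; linarith
    set μ := ε / L with hμ
    set ν := (t - s) / L with hν
    have hμ0 : 0 ≤ μ := div_nonneg hε hLpos.le
    have hν0 : 0 ≤ ν := div_nonneg (by linarith) hLpos.le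
    have hμν : μ + ν = 1 := by
      rw [hμ, hν, ← add_div, div_eq_one_iff_eq hLpos.ne', hL]; ring
    have hsmem : s ∈ Icc (0:ℝ) 1 := ⟨hs, by linarith⟩
    have htεmem : t + ε ∈ Icc (0:ℝ) 1 := ⟨by linarith, ht⟩
    have h1 := hlc.2 hsmem htεmem hμ0 hν0 hμν
    have h2 := hlc.2 hsmem htεmem hν0 hμ0 (by linarith)
    have e1 : μ • s + ν • (t + ε) = t := by
      simp only [smul_eq_mul, hμ, hν]; field_simp; ring
    have e2 : ν • s + μ • (t + ε) = s + ε := by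
      simp only [smul_eq_mul, hμ, hν]; field_simp; ring
    rw [e1] at h1
    rw [e2] at h2
    simp only [smul_eq_mul] at h1 h2
    have hid : μ * Real.log (f s) + ν * Real.log (f (t + ε))
        + (ν * Real.log (f s) + μ * Real.log (f (t + ε)))
        = Real.log (f s) + Real.log (f (t + ε)) := by
      linear_combination (Real.log (f s) + Real.log (f (t + ε))) * hμν
    have hlog : Real.log (f (t + ε)) + Real.log (f s)
        ≤ Real.log (f (s + ε)) + Real.log (f t) := by linarith [add_le_add h1 h2, hid]
    have p1 : 0 < f (t + ε) := hpos _ htεmem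
    have p2 : 0 < f s := hpos _ hsmem
    have p3 : 0 < f (s + ε) := hpos _ ⟨by linarith, by linarith⟩
    have p4 : 0 < f t := hpos _ ⟨by linarith, by linarith⟩
    rw [← Real.log_le_log_iff (by positivity) (by positivity),
      Real.log_mul p1.ne' p2.ne', Real.log_mul p3.ne' p4.ne']
    exact hlog

/-- Core translation step: shifting the interval by `ε` increases the mean by at most `ε`. -/
lemma shift_le (f : ℝ → ℝ) (hc : Continuous f) (hpos : ∀ t ∈ Icc (0:ℝ) 1, 0 < f t)
    (hlc : LogConcaveOn01 f) {a b ε : ℝ} (ha : 0 ≤ a) (hab : a < b) (hε : 0 ≤ ε)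
    (hbε : b + ε ≤ 1) :
    condMean f (a + ε) (b + ε) ≤ condMean f a b + ε := by
  set g : ℝ → ℝ := fun t => f (t + ε) with hgdef
  have hgc : Continuous g := hc.comp (continuous_id.add continuous_const)
  have hgpos : ∀ t ∈ Icc a b, 0 < g t := fun t htm =>
    hpos _ ⟨by linarith [htm.1], by linarith [htm.2]⟩
  have hfpos : ∀ t ∈ Icc a b, 0 < f t := fun t htm =>
    hpos _ ⟨by linarith [htm.1], by linarith [htm.2]⟩
  have hG : 0 < ∫ t in a..b, g t := int_pos_aux g hgc hab hgpos
  have hig : IntervalIntegrable g volume a b := hgc.intervalIntegrable a b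
  have hitg : IntervalIntegrable (fun t => t * g t) volume a b :=
    (continuous_id.mul hgc).intervalIntegrable a b
  -- rewrite condMean f (a+ε) (b+ε) as condMean g a b + ε
  have hnum : (∫ t in (a+ε)..(b+ε), t * f t) = (∫ t in a..b, t * g t) + ε * ∫ t in a..b, g t := by
    rw [← intervalIntegral.integral_comp_add_right (fun t => t * f t) ε]
    rw [← intervalIntegral.integral_const_mul,
      ← intervalIntegral.integral_add hitg (hig.const_mul ε)]
    congr 1; funext t; simp only [hgdef]; ring
  have hden : (∫ t in (a+ε)..(b+ε), f t) = ∫ t in a..b, g t := by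
    rw [← intervalIntegral.integral_comp_add_right f ε]
  have hrw : condMean f (a + ε) (b + ε) = condMean g a b + ε := by
    rw [condMean, condMean, hnum, hden, add_div, mul_div_assoc, div_self hG.ne', mul_one]
  rw [hrw]
  have hcmp : condMean g a b ≤ condMean f a b := by
    apply condMean_le_of_ratio f g hc hgc hab hfpos hgpos
    intro s t hs hst htb
    exact lc_cross f hpos hlc (by linarith) hst hε (by linarith)
  linarith

/-- asymmetric translation property of conditional means for
logconcave densities. -/
theorem stmt_13 (f : ℝ → ℝ)
    (hf_cont : Continuous f) (hf_pos : ∀ t ∈ Icc (0:ℝ) 1, 0 < f t)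
    (hf_lc : LogConcaveOn01 f)
    (a b ε₁ ε₂ : ℝ) (ha : 0 ≤ a) (hab : a < b) (hb : b ≤ 1)
    (hε₁ : 0 ≤ ε₁) (hε₂ : 0 ≤ ε₂)
    (hab' : a + ε₁ < b + ε₂) (hbε : b + max ε₁ ε₂ ≤ 1) :
    condMean f (a + ε₁) (b + ε₂) ≤ condMean f a b + max ε₁ ε₂ := by
  set ε := max ε₁ ε₂ with hεdef
  have hε : 0 ≤ ε := le_trans hε₁ (le_max_left _ _)
  have haε : a + ε < b + ε₂ := by
    rcases max_cases ε₁ ε₂ with ⟨h1, _⟩ | ⟨h1, _⟩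
    · rw [hεdef, h1]; exact hab'
    · rw [hεdef, h1]; linarith
  have hpos1 : ∀ t ∈ Icc (a + ε₁) (b + ε₂), 0 < f t := fun t htm =>
    hf_pos t ⟨by linarith [htm.1], by linarith [htm.2, le_max_right ε₁ ε₂]⟩
  have step1 : condMean f (a + ε₁) (b + ε₂) ≤ condMean f (a + ε) (b + ε₂) :=
    condMean_mono_left f hf_cont (by simp [hεdef, le_max_left]) haε hpos1
  have step2 : condMean f (a + ε) (b + ε₂) ≤ condMean f (a + ε) (b + ε) := by
    apply condMean_mono_right f hf_cont haε (by simp [hεdef, le_max_right])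
    intro t htm
    exact hf_pos t ⟨by linarith [htm.1], by linarith [htm.2]⟩
  have step3 : condMean f (a + ε) (b + ε) ≤ condMean f a b + ε :=
    shift_le f hf_cont hf_pos hf_lc ha hab hε hbε
  linarith
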